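/- If c > a, d < b, and c + d ≥ 0, then the set E = {(x,y,z) ∈ S² : z ≥ (a+dx)/c} is invariant under V, i.e. V(E) ⊆ E. -/
import Mathlib

open Filter Topology

noncomputable def V (a b c d : ℝ) (p : ℝ × ℝ × ℝ) : ℝ × ℝ × ℝ :=
  (p.1 * (1 - b + d * p.2.1),
   p.2.1 * (1 - a - d * p.1 + c * p.2.2),
   p.2.2 * (1 - c * p.2.1) + a * p.2.1 + b * p.1)

def S2 : Set (ℝ × ℝ × ℝ) :=
  {p | 0 ≤ p.1 ∧ 0 ≤ p.2.1 ∧ 0 ≤ p.2.2 ∧ p.1 + p.2.1 + p.2.2 = 1}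
theorem stmt17 (a b c d : ℝ) (ha0 : 0 ≤ a) (ha1 : a ≤ 1) (hb0 : 0 ≤ b) (hb1 : b ≤ 1)
    (hac : a < c) (hc : c ≤ 1 + a) (hd1 : -(1 - b) ≤ d) (hdb : d < b)
    (hcd : 0 ≤ c + d) (hcne : c ≠ 0) (hdne : d ≠ 0) :
    Set.MapsTo (V a b c d) {p ∈ S2 | (a + d * p.1) / c ≤ p.2.2}
      {p ∈ S2 | (a + d * p.1) / c ≤ p.2.2} := by
  rintro ⟨x, y, z⟩ ⟨⟨hx, hy, hz, hsum⟩, hkey⟩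
  simp only [S2, Set.mem_setOf_eq, V] at *
  have hc0 : (0:ℝ) < c := lt_of_le_of_lt ha0 hac
  rw [div_le_iff₀ hc0] at hkey
  rw [div_le_iff₀ hc0]
  have hg : a + d * x ≤ z * c := hkey
  have hy1 : y ≤ 1 := by linarith
  have hx1 : x ≤ 1 := by linarith
  -- c * y ≤ 1 on the set E
  have hsc : c * y = c * (x + y + z) - c * x - c * z := by ring
  rw [hsum] at hsc
  have hcy : c * y ≤ 1 := by nlinarith [mul_nonneg hx hcd]
  -- 1 - b + d * y ≥ 0
  have hfac : 0 ≤ 1 - b + d * y := by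
    nlinarith [mul_nonneg hy (by linarith : 0 ≤ d + (1 - b)),
      mul_nonneg (by linarith : (0:ℝ) ≤ 1 - b) (by linarith : 0 ≤ 1 - y)]
  -- b - d * y ≥ 0
  have hbd : d * y ≤ b := by
    rcases le_or_gt 0 d with h | h
    · nlinarith [mul_nonneg h (by linarith : 0 ≤ 1 - y)]
    · nlinarith [mul_nonneg hy (le_of_lt (neg_pos.2 h))]
  refine ⟨⟨?_, ?_, ?_, by ring_nf; linarith⟩, ?_⟩
  · exact mul_nonneg hx hfac
  · nlinarith
  · nlinarith [mul_nonneg hz (by linarith : 0 ≤ 1 - c * y), mul_nonneg ha0 hy,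
      mul_nonneg hb0 hx]
  · nlinarith [mul_nonneg (by linarith : 0 ≤ z * c - a - d * x)
      (by linarith : 0 ≤ 1 - c * y),
      mul_nonneg (mul_nonneg hx hcd) (by linarith : 0 ≤ b - d * y)]
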